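/- Suppose char k ≠ 2 and α = β = 1 (the identity automorphism). Then with Dₙ := dim_k Ker d_{n+1} − dim_k Im dₙ for n > 0, one has D₁ = 2, D₂ = 1, and Dₙ = 0 for n ≥ 3. In other words, the Hochschild cohomology of Λ satisfies dim HH¹(Λ) = 2, dim HH²(Λ) = 1, and HHⁿ(Λ) = 0 for n ≥ 3, showing that Λ gives a negative answer to Happel's question (HH vanishes in high degrees but Λ has infinite global dimension). -/

import Mathlib

/-- The matrix of the differential `dₙ : Λⁿ → Λ^{n+1}` of the complex computing
`HH^*(Λ, ₁Λ_ψ)` for `ψ(x) = αx`, `ψ(y) = βy`, in the standard basis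
`{eᵢ, xeᵢ, yeᵢ, yxeᵢ}` (encoded by `Fin 4` as `0 ↦ eᵢ, 1 ↦ xeᵢ, 2 ↦ yeᵢ, 3 ↦ yxeᵢ`):
`eᵢ^{n−1} ↦ [1+(−1)ⁿqⁱα]xeᵢⁿ + [q^{n−i−1}+(−1)ⁿβ]ye^n_{i+1}`,
`xeᵢ^{n−1} ↦ [q^{n−i−1}+(−1)^{n+1}qβ]yxe^n_{i+1}`,
`yeᵢ^{n−1} ↦ [−q+(−1)ⁿqⁱα]yxeᵢⁿ`, `yxeᵢ^{n−1} ↦ 0`. -/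
def Dmat (k : Type) [Field k] (q α β : k) (n : ℕ) :
    Matrix (Fin (n + 1) × Fin 4) (Fin n × Fin 4) k := fun jb ia =>
  if jb.2 = 1 ∧ ia.2 = 0 ∧ (jb.1 : ℕ) = (ia.1 : ℕ) then
    1 + (-1 : k) ^ n * q ^ (ia.1 : ℕ) * α
  else if jb.2 = 2 ∧ ia.2 = 0 ∧ (jb.1 : ℕ) = (ia.1 : ℕ) + 1 then
    q ^ (n - (ia.1 : ℕ) - 1) + (-1 : k) ^ n * β
  else if jb.2 = 3 ∧ ia.2 = 1 ∧ (jb.1 : ℕ) = (ia.1 : ℕ) + 1 then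
    q ^ (n - (ia.1 : ℕ) - 1) + (-1 : k) ^ (n + 1) * q * β
  else if jb.2 = 3 ∧ ia.2 = 2 ∧ (jb.1 : ℕ) = (ia.1 : ℕ) then
    -q + (-1 : k) ^ n * q ^ (ia.1 : ℕ) * α
  else 0

/-- The differential `dₙ : Λⁿ → Λ^{n+1}` as a `k`-linear map. -/
noncomputable def dMap (k : Type) [Field k] (q α β : k) (n : ℕ) :
    (Fin n × Fin 4 → k) →ₗ[k] (Fin (n + 1) × Fin 4 → k) :=
  (Dmat k q α β n).mulVecLin

open Module Submodule Matrix

lemma aux_rank_eq {k : Type} [Field k] {R C ι : Type} [Fintype R] [Fintype C] [Fintype ι]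
    [DecidableEq R] [DecidableEq C] [DecidableEq ι]
    (M : Matrix R C k) (col : ι → C) (ρ : ι → R) (g : ι → (R → k))
    (hdiag : ∀ i, M (ρ i) (col i) ≠ 0)
    (hoff : ∀ i j, i ≠ j → M (ρ j) (col i) = 0)
    (hspan : ∀ c : C, Mᵀ c ∈ span k (Set.range g)) :
    M.rank = Fintype.card ι := by
  have hind : LinearIndependent k (fun i => Mᵀ (col i)) := by
    rw [Fintype.linearIndependent_iff]
    intro f hf j
    have h2 := congrFun hf (ρ j)
    simp only [Finset.sum_apply, Pi.smul_apply, smul_eq_mul, Pi.zero_apply,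
      Matrix.transpose_apply] at h2
    rw [Finset.sum_eq_single j] at h2
    · rcases mul_eq_zero.mp h2 with h | h
      · exact h
      · exact absurd h (hdiag j)
    · intro i _ hij
      rw [hoff i j hij, mul_zero]
    · intro h; exact absurd (Finset.mem_univ j) h
  have hrk : M.rank = finrank k ↥(LinearMap.range M.mulVecLin) := rfl
  have hle1 : Fintype.card ι ≤ M.rank := by
    rw [hrk, ← finrank_span_eq_card hind]
    apply Submodule.finrank_mono
    rw [Matrix.range_mulVecLin]
    exact span_mono (by rintro _ ⟨i, rfl⟩; exact ⟨col i, rfl⟩)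
  have hle2 : M.rank ≤ Fintype.card ι := by
    rw [hrk, Matrix.range_mulVecLin]
    have h1 : span k (Set.range Mᵀ) ≤ span k (Set.range g) :=
      span_le.mpr (by rintro _ ⟨c, rfl⟩; exact hspan c)
    exact le_trans (Submodule.finrank_mono h1) (finrank_range_le_card g)
  omega

lemma hneg_aux {k : Type} [Field k] {q : k} (hq' : ∀ m : ℕ, 0 < m → q ^ m ≠ 1)
    (hchar : ringChar k ≠ 2) : ∀ m : ℕ, q ^ m ≠ -1 := by
  intro m h
  rcases Nat.eq_zero_or_pos m with rfl | hm
  · rw [pow_zero] at h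
    exact Ring.neg_one_ne_one_of_char_ne_two hchar h.symm
  · exact hq' (m + m) (by omega) (by rw [pow_add, h]; ring)

variable {k : Type} [Field k]

lemma col_x (q : k) (n : ℕ) (i : Fin n) :
    (Dmat k q 1 1 n)ᵀ (i, 1) =
      (q ^ (n - (i : ℕ) - 1) + (-1 : k) ^ (n + 1) * q) •
        (Pi.single (i.succ, (3 : Fin 4)) 1 : Fin (n + 1) × Fin 4 → k) := by
  funext r
  obtain ⟨j, b⟩ := r
  simp only [Dmat, transpose_apply, Pi.smul_apply, Pi.single_apply, Prod.mk.injEq,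
    smul_eq_mul, mul_one, Fin.ext_iff, Fin.val_succ]
  split_ifs <;> simp_all

lemma col_y (q : k) (n : ℕ) (i : Fin n) :
    (Dmat k q 1 1 n)ᵀ (i, 2) =
      (-q + (-1 : k) ^ n * q ^ (i : ℕ)) •
        (Pi.single (i.castSucc, (3 : Fin 4)) 1 : Fin (n + 1) × Fin 4 → k) := by
  funext r
  obtain ⟨j, b⟩ := r
  simp only [Dmat, transpose_apply, Pi.smul_apply, Pi.single_apply, Prod.mk.injEq,
    smul_eq_mul, mul_one, Fin.ext_iff, Fin.coe_castSucc]
  split_ifs <;> simp_all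

lemma col_yx (q : k) (n : ℕ) (i : Fin n) : (Dmat k q 1 1 n)ᵀ (i, 3) = 0 := by
  funext r
  obtain ⟨j, b⟩ := r
  simp only [Dmat, transpose_apply, Pi.zero_apply]
  split_ifs <;> simp_all

lemma col_e (q : k) (n : ℕ) (i : Fin n) :
    (Dmat k q 1 1 n)ᵀ (i, 0) =
      (1 + (-1 : k) ^ n * q ^ (i : ℕ)) •
        (Pi.single (i.castSucc, (1 : Fin 4)) 1 : Fin (n + 1) × Fin 4 → k) +
      (q ^ (n - (i : ℕ) - 1) + (-1 : k) ^ n) •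
        (Pi.single (i.succ, (2 : Fin 4)) 1 : Fin (n + 1) × Fin 4 → k) := by
  funext r
  obtain ⟨j, b⟩ := r
  simp only [Dmat, transpose_apply, Pi.add_apply, Pi.smul_apply, Pi.single_apply,
    Prod.mk.injEq, smul_eq_mul, mul_one, Fin.ext_iff, Fin.val_succ, Fin.coe_castSucc]
  split_ifs <;> simp_all <;> omega

lemma entry_xy (q : k) (n : ℕ) (r : Fin (n + 1) × Fin 4) (c : Fin n × Fin 4)
    (hb : r.2 ≠ 3) (hc : c.2 = 1 ∨ c.2 = 2) : Dmat k q 1 1 n r c = 0 := by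
  obtain ⟨j, b⟩ := r
  obtain ⟨i, b'⟩ := c
  simp only at hb hc
  simp only [Dmat]
  split_ifs <;> simp_all

lemma entry_e3 (q : k) (n : ℕ) (r : Fin (n + 1) × Fin 4) (c : Fin n × Fin 4)
    (hb : r.2 = 3) (hc : c.2 = 0) : Dmat k q 1 1 n r c = 0 := by
  obtain ⟨j, b⟩ := r
  obtain ⟨i, b'⟩ := c
  simp only at hb hc
  simp only [Dmat]
  split_ifs <;> simp_all

lemma fin4_cases (b : Fin 4) : b = 0 ∨ b = 1 ∨ b = 2 ∨ b = 3 := by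
  revert b; decide

lemma fin2_cases (b : Fin 2) : b = 0 ∨ b = 1 := by
  revert b; decide
lemma rank_D1 {q : k} (hq' : ∀ m : ℕ, 0 < m → q ^ m ≠ 1)
    (hchar : ringChar k ≠ 2) : (Dmat k q 1 1 1).rank = 2 := by
  have hneg := hneg_aux hq' hchar
  have hq1 : q ≠ 1 := by simpa using hq' 1 one_pos
  have hqn1 : q ≠ -1 := by simpa using hneg 1
  have h := aux_rank_eq (Dmat k q 1 1 1)
    (fun j : Fin 2 => if j = 0 then ((0 : Fin 1), (2 : Fin 4)) else ((0 : Fin 1), (1 : Fin 4)))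
    (fun j : Fin 2 => (j, (3 : Fin 4)))
    (fun j : Fin 2 => (Pi.single (j, (3 : Fin 4)) 1 : Fin 2 × Fin 4 → k))
    ?_ ?_ ?_
  · simpa using h
  · intro i
    fin_cases i <;> simp [Dmat]
    · intro h; exact hqn1 (by linear_combination -h)
    · intro h; exact hqn1 (by linear_combination h)
  · intro i j hij
    fin_cases i <;> fin_cases j <;> simp_all [Dmat]
  · rintro ⟨i, b⟩
    have hi : i = 0 := Subsingleton.elim _ _
    subst hi
    rcases fin4_cases b with rfl | rfl | rfl | rfl
    · have hz : (Dmat k q 1 1 1)ᵀ (0, 0) = 0 := by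
        funext r
        obtain ⟨j, b'⟩ := r
        simp only [Dmat, transpose_apply, Pi.zero_apply]
        split_ifs <;> simp_all
      rw [hz]; exact zero_mem _
    · rw [col_x]
      exact Submodule.smul_mem _ _ (subset_span ⟨1, rfl⟩)
    · rw [col_y]
      exact Submodule.smul_mem _ _ (subset_span ⟨0, rfl⟩)
    · rw [col_yx]; exact zero_mem _
lemma rank_D2 {q : k} (hq' : ∀ m : ℕ, 0 < m → q ^ m ≠ 1)
    (hchar : ringChar k ≠ 2) : (Dmat k q 1 1 2).rank = 4 := by
  have hneg := hneg_aux hq' hchar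
  have hq1 : q ≠ 1 := by simpa using hq' 1 one_pos
  have hqn1 : q ≠ -1 := by simpa using hneg 1
  have h2 : (2 : k) ≠ 0 := Ring.two_ne_zero hchar
  have h := aux_rank_eq (Dmat k q 1 1 2)
    ![((0 : Fin 2), (0 : Fin 4)), (1, 0), (0, 2), (1, 1)]
    ![((0 : Fin 3), (1 : Fin 4)), (1, 1), (0, 3), (2, 3)]
    ![(Dmat k q 1 1 2)ᵀ (0, 0), (Dmat k q 1 1 2)ᵀ (1, 0),
      (Pi.single ((0 : Fin 3), (3 : Fin 4)) 1 : Fin 3 × Fin 4 → k),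
      (Pi.single ((2 : Fin 3), (3 : Fin 4)) 1 : Fin 3 × Fin 4 → k)]
    ?_ ?_ ?_
  · simpa using h
  · intro i
    fin_cases i <;> simp [Dmat]
    · intro h; exact h2 (by linear_combination h)
    · intro h; exact hqn1 (by linear_combination h)
    · intro h; exact hq1 (by linear_combination -h)
    · intro h; exact hq1 (by linear_combination -h)
  · intro i j hij
    fin_cases i <;> fin_cases j <;> simp_all [Dmat]
  · rintro ⟨i, b⟩
    rcases fin4_cases b with rfl | rfl | rfl | rfl
    · rcases fin2_cases i with rfl | rfl
      · exact subset_span ⟨0, rfl⟩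
      · exact subset_span ⟨1, rfl⟩
    · rw [col_x]
      rcases fin2_cases i with rfl | rfl
      · have hc : q ^ (2 - ((0 : Fin 2) : ℕ) - 1) + (-1 : k) ^ (2 + 1) * q = 0 := by
          norm_num
        rw [hc, zero_smul]; exact zero_mem _
      · exact Submodule.smul_mem _ _ (subset_span ⟨3, rfl⟩)
    · rw [col_y]
      rcases fin2_cases i with rfl | rfl
      · exact Submodule.smul_mem _ _ (subset_span ⟨2, rfl⟩)
      · have hc : -q + (-1 : k) ^ 2 * q ^ ((1 : Fin 2) : ℕ) = 0 := by norm_num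
        rw [hc, zero_smul]; exact zero_mem _
    · rw [col_yx]; exact zero_mem _
lemma rank_Dbig {q : k} (hq : q ≠ 0) (hq' : ∀ m : ℕ, 0 < m → q ^ m ≠ 1)
    (hchar : ringChar k ≠ 2) {n : ℕ} (hn : 3 ≤ n) :
    (Dmat k q 1 1 n).rank = 2 * n + 1 := by
  have hneg := hneg_aux hq' hchar
  have hq1 : q ≠ 1 := by simpa using hq' 1 one_pos
  have hqn1 : q ≠ -1 := by simpa using hneg 1
  have hcanc : ∀ m : ℕ, q ^ (m + 1) = q → q ^ m = 1 := fun m h =>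
    mul_right_cancel₀ hq (by rw [← pow_succ, h, one_mul])
  have hcanc' : ∀ m : ℕ, q ^ (m + 1) = -q → q ^ m = -1 := fun m h =>
    mul_right_cancel₀ hq (by rw [← pow_succ, h]; ring)
  -- the five nonvanishing facts
  have F1 : q ^ (n - 1) + (-1 : k) ^ n ≠ 0 := by
    rcases Nat.even_or_odd n with hpar | hpar
    · rw [hpar.neg_one_pow]
      intro h; exact hneg (n - 1) (by linear_combination h)
    · rw [hpar.neg_one_pow]
      intro h; exact hq' (n - 1) (by omega) (by linear_combination h)
  have F2 : ∀ m : ℕ, m ≠ 0 → 1 + (-1 : k) ^ n * q ^ m ≠ 0 := by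
    intro m hm
    rcases Nat.even_or_odd n with hpar | hpar
    · rw [hpar.neg_one_pow]
      intro h; exact hneg m (by linear_combination h)
    · rw [hpar.neg_one_pow]
      intro h; exact hq' m (by omega) (by linear_combination -h)
  have F3 : q ^ (n - 1) + (-1 : k) ^ (n + 1) * q ≠ 0 := by
    rcases Nat.even_or_odd n with hpar | hpar
    · rw [(hpar.add_one).neg_one_pow]
      intro h
      have h2 : q ^ (n - 2 + 1) = q := by
        have : n - 2 + 1 = n - 1 := by omega
        rw [this]; linear_combination h
      exact hq' (n - 2) (by omega) (hcanc _ h2)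
    · rw [(Odd.add_one hpar).neg_one_pow]
      intro h
      have h2 : q ^ (n - 2 + 1) = -q := by
        have : n - 2 + 1 = n - 1 := by omega
        rw [this]; linear_combination h
      exact hneg (n - 2) (hcanc' _ h2)
  have F4 : q ^ (n - (n - 1) - 1) + (-1 : k) ^ (n + 1) * q ≠ 0 := by
    have he : n - (n - 1) - 1 = 0 := by omega
    rw [he, pow_zero]
    rcases Nat.even_or_odd n with hpar | hpar
    · rw [(hpar.add_one).neg_one_pow]
      intro h; exact hq1 (by linear_combination -h)
    · rw [(Odd.add_one hpar).neg_one_pow]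
      intro h; exact hqn1 (by linear_combination h)
  have F5 : ∀ m : ℕ, m ≠ 1 → -q + (-1 : k) ^ n * q ^ m ≠ 0 := by
    intro m hm
    rcases Nat.even_or_odd n with hpar | hpar
    · rw [hpar.neg_one_pow]
      intro h
      rcases Nat.eq_zero_or_pos m with rfl | hmpos
      · rw [pow_zero] at h; exact hq1 (by linear_combination -h)
      · have h2 : q ^ (m - 1 + 1) = q := by
          have : m - 1 + 1 = m := by omega
          rw [this]; linear_combination h
        exact hq' (m - 1) (by omega) (hcanc _ h2)
    · rw [hpar.neg_one_pow]
      intro h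
      rcases Nat.eq_zero_or_pos m with rfl | hmpos
      · rw [pow_zero] at h; exact hqn1 (by linear_combination -h)
      · have h2 : q ^ (m - 1 + 1) = -q := by
          have : m - 1 + 1 = m := by omega
          rw [this]; linear_combination -h
        exact hneg (m - 1) (hcanc' _ h2)
  have key := aux_rank_eq (Dmat k q 1 1 n)
    (Sum.elim
      (fun i : Fin n => ((i, 0) : Fin n × Fin 4))
      (fun j : Fin (n + 1) =>
        if (j : ℕ) = 1 then ((⟨0, by omega⟩ : Fin n), (1 : Fin 4))
        else if (j : ℕ) = n then ((⟨n - 1, by omega⟩ : Fin n), (1 : Fin 4))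
        else ((⟨min (j : ℕ) (n - 1), by omega⟩ : Fin n), (2 : Fin 4))))
    (Sum.elim
      (fun i : Fin n =>
        if (i : ℕ) = 0 then ((⟨1, by omega⟩ : Fin (n + 1)), (2 : Fin 4))
        else (i.castSucc, (1 : Fin 4)))
      (fun j : Fin (n + 1) => (j, (3 : Fin 4))))
    (Sum.elim
      (fun i : Fin n => (Dmat k q 1 1 n)ᵀ (i, 0))
      (fun j : Fin (n + 1) => (Pi.single (j, (3 : Fin 4)) 1 : Fin (n + 1) × Fin 4 → k)))
    ?_ ?_ ?_
  · rw [key]; simp; omega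
  · -- diagonal entries nonzero
    rintro (i | j)
    · by_cases hi : (i : ℕ) = 0
      · simp only [Sum.elim_inl, hi, if_pos rfl, Dmat]
        simp [hi]
        exact F1
      · simp only [Sum.elim_inl, if_neg hi, Dmat]
        simp [hi]
        exact F2 _ hi
    · by_cases h1 : (j : ℕ) = 1
      · simp only [Sum.elim_inr, if_pos h1, Dmat]
        simp [h1]
        exact F3
      · by_cases h2 : (j : ℕ) = n
        · simp only [Sum.elim_inr, if_neg h1, if_pos h2, Dmat]
          simp [h2]
          exact ⟨by omega, F4⟩
        · have hj : min (j : ℕ) (n - 1) = (j : ℕ) := by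
            have := j.isLt; omega
          simp only [Sum.elim_inr, if_neg h1, if_neg h2, Dmat]
          simp [hj]
          exact F5 _ h1
  · -- off-diagonal entries zero
    rintro (i | j) (i' | j') hij
    · have hne : (i : ℕ) ≠ (i' : ℕ) := fun h => hij (congrArg Sum.inl (Fin.val_injective h))
      simp only [Sum.elim_inl]
      rw [← Matrix.transpose_apply (Dmat k q 1 1 n), col_e]
      by_cases hi' : (i' : ℕ) = 0 <;>
        simp [hi', Pi.single_apply, Prod.ext_iff, Fin.ext_iff] <;> omega
    · simp only [Sum.elim_inl, Sum.elim_inr]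
      exact entry_e3 q n _ _ rfl rfl
    · simp only [Sum.elim_inl, Sum.elim_inr]
      apply entry_xy
      · split_ifs <;> simp
      · split_ifs <;> simp
    · have hne : (j : ℕ) ≠ (j' : ℕ) := fun h => hij (congrArg Sum.inr (Fin.val_injective h))
      have hlt := j.isLt
      have hlt' := j'.isLt
      simp only [Sum.elim_inr]
      rw [← Matrix.transpose_apply (Dmat k q 1 1 n)]
      split_ifs with h1 h2 h3
      · rw [col_x]
        simp [Pi.single_apply, Prod.ext_iff, Fin.ext_iff]
        omega
      · rw [col_x]
        simp [Pi.single_apply, Prod.ext_iff, Fin.ext_iff]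
        omega
      · rw [col_y]
        simp [Pi.single_apply, Prod.ext_iff, Fin.ext_iff]
        omega
  · -- spanning
    rintro ⟨i, b⟩
    rcases fin4_cases b with rfl | rfl | rfl | rfl
    · exact subset_span ⟨Sum.inl i, rfl⟩
    · rw [col_x]
      exact Submodule.smul_mem _ _ (subset_span ⟨Sum.inr i.succ, rfl⟩)
    · rw [col_y]
      exact Submodule.smul_mem _ _ (subset_span ⟨Sum.inr i.castSucc, rfl⟩)
    · rw [col_yx]; exact zero_mem _
/-- suppose `char k ≠ 2` and `α = β = 1` (the identity automorphism,
so the complex computes the ordinary Hochschild cohomology `HH^*(Λ)`). Then with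
`Dₙ = dim Ker d_{n+1} − dim Im dₙ` for `n > 0`: `D₁ = 2`, `D₂ = 1`, and `Dₙ = 0`
for `n ≥ 3`; i.e. `dim HH¹(Λ) = 2`, `dim HH²(Λ) = 1`, `HHⁿ(Λ) = 0` for `n ≥ 3`,
giving a negative answer to Happel's question. -/
theorem stmt16 (k : Type) [Field k] (q : k) (hq : q ≠ 0)
    (hq' : ∀ m : ℕ, 0 < m → q ^ m ≠ 1)
    (hchar : ringChar k ≠ 2) :
    Module.finrank k ↥(LinearMap.ker (dMap k q 1 1 2)) =
      Module.finrank k ↥(LinearMap.range (dMap k q 1 1 1)) + 2 ∧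
    Module.finrank k ↥(LinearMap.ker (dMap k q 1 1 3)) =
      Module.finrank k ↥(LinearMap.range (dMap k q 1 1 2)) + 1 ∧
    ∀ n : ℕ, 3 ≤ n →
      Module.finrank k ↥(LinearMap.ker (dMap k q 1 1 (n + 1))) =
        Module.finrank k ↥(LinearMap.range (dMap k q 1 1 n)) := by
  have hrange : ∀ n : ℕ, Module.finrank k ↥(LinearMap.range (dMap k q 1 1 n)) =
      (Dmat k q 1 1 n).rank := fun n => rfl
  have hker : ∀ n : ℕ, Module.finrank k ↥(LinearMap.ker (dMap k q 1 1 n)) +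
      (Dmat k q 1 1 n).rank = 4 * n := by
    intro n
    have h := LinearMap.finrank_range_add_finrank_ker (dMap k q 1 1 n)
    have hd : Module.finrank k (Fin n × Fin 4 → k) = 4 * n := by
      rw [Module.finrank_pi]
      simp [Fintype.card_prod]
      ring
    rw [hd, hrange n] at h
    omega
  have r1 := rank_D1 hq' hchar
  have r2 := rank_D2 hq' hchar
  have r3 : (Dmat k q 1 1 3).rank = 7 := by
    have := rank_Dbig hq hq' hchar (le_refl 3); omega
  refine ⟨?_, ?_, ?_⟩
  · have h2 := hker 2
    rw [hrange 1, r1, r2] at *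
    omega
  · have h3 := hker 3
    rw [hrange 2, r2, r3] at *
    omega
  · intro n hn
    have hA := rank_Dbig hq hq' hchar hn
    have hB := rank_Dbig hq hq' hchar (show 3 ≤ n + 1 by omega)
    have h := hker (n + 1)
    rw [hrange n, hA, hB] at *
    omega
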